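/- arXiv:2205.10659 — 14 statements merged into one kernel-verified Lean document; each statement's English description precedes it below -/
import Mathlib

section
/- Let μ ∈ ℝ with μ ≠ a and μ ≠ b, and let p = (p₁,p₂) satisfy p₁²/(a−μ) + p₂²/(b−μ) = 1 (so p lies on the confocal quadric with parameter μ). Set n = (p₁/(a−μ), p₂/(b−μ)); then n ≠ 0, and for every v ∈ ℝ² the billiard-reflected velocity v' = v − 2·(⟨v,n⟩/⟨n,n⟩)·n satisfies Λ(p, v') = Λ(p, v). Thus the caustic integral is preserved under billiard reflection in any quadric of the confocal family (integrability of the billiard, Kozlov–Treshchev). -/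
/-- The caustic integral `Λ(p,v) = v₁²/a + v₂²/b − (v₁p₂ − p₁v₂)²/(ab)`. -/
noncomputable def caustic (a b p₁ p₂ v₁ v₂ : ℝ) : ℝ :=
  v₁ ^ 2 / a + v₂ ^ 2 / b - (v₁ * p₂ - p₁ * v₂) ^ 2 / (a * b)

/-- Integrability of the billiard (Kozlov–Treshchev): the caustic integral is
preserved under billiard reflection in any quadric of the confocal family.
Here `n = (p₁/(a−μ), p₂/(b−μ))` is the normal to the quadric of parameter `μ`
at the point `p`, and the reflected velocity is `v' = v − 2(⟨v,n⟩/⟨n,n⟩)n`. -/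
theorem caustic_reflection_invariant (a b : ℝ) (hb : 0 < b) (hba : b < a)
    (μ : ℝ) (hμa : μ ≠ a) (hμb : μ ≠ b)
    (p₁ p₂ : ℝ) (hp : p₁ ^ 2 / (a - μ) + p₂ ^ 2 / (b - μ) = 1) :
    ((p₁ / (a - μ), p₂ / (b - μ)) : ℝ × ℝ) ≠ (0, 0) ∧
    ∀ v₁ v₂ : ℝ,
      caustic a b p₁ p₂
        (v₁ - 2 * ((v₁ * (p₁ / (a - μ)) + v₂ * (p₂ / (b - μ))) /
            ((p₁ / (a - μ)) * (p₁ / (a - μ)) + (p₂ / (b - μ)) * (p₂ / (b - μ)))) *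
          (p₁ / (a - μ)))
        (v₂ - 2 * ((v₁ * (p₁ / (a - μ)) + v₂ * (p₂ / (b - μ))) /
            ((p₁ / (a - μ)) * (p₁ / (a - μ)) + (p₂ / (b - μ)) * (p₂ / (b - μ)))) *
          (p₂ / (b - μ)))
      = caustic a b p₁ p₂ v₁ v₂ := by
  have ha0 : (0:ℝ) < a := hb.trans hba
  have ha : a ≠ 0 := ne_of_gt ha0
  have hb' : b ≠ 0 := ne_of_gt hb
  have hA : a - μ ≠ 0 := sub_ne_zero.mpr (Ne.symm hμa)
  have hB : b - μ ≠ 0 := sub_ne_zero.mpr (Ne.symm hμb)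
  have hporig : ¬ (p₁ = 0 ∧ p₂ = 0) := by
    rintro ⟨h1, h2⟩
    rw [h1, h2] at hp
    norm_num at hp
  constructor
  · intro h
    have h1 : p₁ / (a - μ) = 0 := by simpa using congrArg Prod.fst h
    have h2 : p₂ / (b - μ) = 0 := by simpa using congrArg Prod.snd h
    refine hporig ⟨?_, ?_⟩
    · rcases div_eq_zero_iff.mp h1 with h | h
      · exact h
      · exact absurd h hA
    · rcases div_eq_zero_iff.mp h2 with h | h
      · exact h
      · exact absurd h hB
  intro v₁ v₂
  obtain ⟨n₁, hn₁⟩ : ∃ x : ℝ, x = p₁ / (a - μ) := ⟨_, rfl⟩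
  obtain ⟨n₂, hn₂⟩ : ∃ x : ℝ, x = p₂ / (b - μ) := ⟨_, rfl⟩
  rw [← hn₁, ← hn₂]
  have hNpos : 0 < n₁ * n₁ + n₂ * n₂ := by
    have hne : n₁ ≠ 0 ∨ n₂ ≠ 0 := by
      by_contra hc
      push_neg at hc
      obtain ⟨h1, h2⟩ := hc
      refine hporig ⟨?_, ?_⟩
      · rcases div_eq_zero_iff.mp (hn₁ ▸ h1) with h | h
        · exact h
        · exact absurd h hA
      · rcases div_eq_zero_iff.mp (hn₂ ▸ h2) with h | h
        · exact h
        · exact absurd h hB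
    rcases hne with h | h
    · nlinarith [mul_self_pos.mpr h, mul_self_nonneg n₂]
    · nlinarith [mul_self_pos.mpr h, mul_self_nonneg n₁]
  have hN0 : n₁ * n₁ + n₂ * n₂ ≠ 0 := ne_of_gt hNpos
  -- key relations
  have h1 : n₁ * p₁ + n₂ * p₂ = 1 := by
    rw [hn₁, hn₂]
    field_simp
    field_simp at hp
    linarith
  have hE : n₁ * p₂ - p₁ * n₂ = (b - a) * (n₁ * n₂) := by
    rw [hn₁, hn₂]
    field_simp
    ring
  obtain ⟨s, hs⟩ : ∃ x : ℝ, x = v₁ * n₁ + v₂ * n₂ := ⟨_, rfl⟩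
  obtain ⟨N, hNdef⟩ : ∃ x : ℝ, x = n₁ * n₁ + n₂ * n₂ := ⟨_, rfl⟩
  rw [← hs, ← hNdef]
  have hN : N ≠ 0 := hNdef ▸ hN0
  -- the central polynomial identity
  have hKey : s * (b * n₁ ^ 2 + a * n₂ ^ 2 - (n₁ * p₂ - p₁ * n₂) ^ 2)
      = N * (b * v₁ * n₁ + a * v₂ * n₂
          - (v₁ * p₂ - p₁ * v₂) * (n₁ * p₂ - p₁ * n₂)) := by
    rw [hs, hNdef]
    linear_combination (v₁ * n₂ - v₂ * n₁) * (n₁ * p₂ - p₁ * n₂) * h1 +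
      (v₁ * n₂ - v₂ * n₁) * hE
  obtain ⟨t, ht⟩ : ∃ x : ℝ, x = 2 * (s / N) := ⟨_, rfl⟩
  rw [← ht]
  have hKey' : t * (b * n₁ ^ 2 + a * n₂ ^ 2 - (n₁ * p₂ - p₁ * n₂) ^ 2)
      = 2 * (b * v₁ * n₁ + a * v₂ * n₂
          - (v₁ * p₂ - p₁ * v₂) * (n₁ * p₂ - p₁ * n₂)) := by
    rw [ht]
    field_simp
    linear_combination hKey
  simp only [caustic]
  field_simp
  linear_combination t * hKey'
end

section
/- Let λ ∈ ℝ with λ ≠ a and λ ≠ b, let p = (p₁,p₂) ∈ ℝ² and let v = (v₁,v₂) be a unit vector (v₁² + v₂² = 1). Then the following Joachimsthal-type identity holds: (p₁v₁/(a−λ) + p₂v₂/(b−λ))² − (v₁²/(a−λ) + v₂²/(b−λ))·(p₁²/(a−λ) + p₂²/(b−λ) − 1) = (ab·Λ(p,v) − λ)/((a−λ)(b−λ)). In particular, the discriminant of the intersection of the line t ↦ p + t·v with the confocal quadric of parameter λ vanishes exactly when λ = ab·Λ(p,v). -/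
/-- Joachimsthal-type identity: the discriminant of the intersection of the line
`t ↦ p + t·v` with the confocal quadric of parameter `λ` equals
`(ab·Λ(p,v) − λ)/((a−λ)(b−λ))`. -/
theorem joachimsthal_identity (a b : ℝ) (hb : 0 < b) (hba : b < a)
    (lam : ℝ) (hla : lam ≠ a) (hlb : lam ≠ b)
    (p₁ p₂ v₁ v₂ : ℝ) (hv : v₁ ^ 2 + v₂ ^ 2 = 1) :
    (p₁ * v₁ / (a - lam) + p₂ * v₂ / (b - lam)) ^ 2
      - (v₁ ^ 2 / (a - lam) + v₂ ^ 2 / (b - lam)) *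
        (p₁ ^ 2 / (a - lam) + p₂ ^ 2 / (b - lam) - 1)
    = (a * b * caustic a b p₁ p₂ v₁ v₂ - lam) / ((a - lam) * (b - lam)) := by
  have ha : (a : ℝ) ≠ 0 := by nlinarith
  have hb0 : (b : ℝ) ≠ 0 := ne_of_gt hb
  have h1 : a - lam ≠ 0 := sub_ne_zero.mpr (Ne.symm hla)
  have h2 : b - lam ≠ 0 := sub_ne_zero.mpr (Ne.symm hlb)
  unfold caustic
  field_simp
  linear_combination (-lam * (a - lam) * (b - lam)) * hv
end

section
/- Let p = (p₁,p₂) ∈ ℝ², let v = (v₁,v₂) be a unit vector (v₁² + v₂² = 1), and set λ = ab·Λ(p,v). Assume λ ≠ a, λ ≠ b, and V := v₁²/(a−λ) + v₂²/(b−λ) ≠ 0. Then there exists t₀ ∈ ℝ such that for every t ∈ ℝ, (p₁ + t·v₁)²/(a−λ) + (p₂ + t·v₂)²/(b−λ) − 1 = V·(t − t₀)². In other words, the straight line through p with direction v is tangent to the quadric of the confocal family whose parameter is λ = ab·Λ(p,v): this quadric is the caustic of the trajectory. -/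
/-- The straight line through `p` with unit direction `v` is tangent to the quadric
of the confocal family with parameter `λ = ab·Λ(p,v)`: this quadric is the caustic
of the trajectory. -/
theorem line_tangent_to_caustic (a b : ℝ) (hb : 0 < b) (hba : b < a)
    (p₁ p₂ v₁ v₂ : ℝ) (hv : v₁ ^ 2 + v₂ ^ 2 = 1)
    (hla : a * b * caustic a b p₁ p₂ v₁ v₂ ≠ a)
    (hlb : a * b * caustic a b p₁ p₂ v₁ v₂ ≠ b)
    (hV : v₁ ^ 2 / (a - a * b * caustic a b p₁ p₂ v₁ v₂)
        + v₂ ^ 2 / (b - a * b * caustic a b p₁ p₂ v₁ v₂) ≠ 0) :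
    ∃ t₀ : ℝ, ∀ t : ℝ,
      (p₁ + t * v₁) ^ 2 / (a - a * b * caustic a b p₁ p₂ v₁ v₂)
        + (p₂ + t * v₂) ^ 2 / (b - a * b * caustic a b p₁ p₂ v₁ v₂) - 1
      = (v₁ ^ 2 / (a - a * b * caustic a b p₁ p₂ v₁ v₂)
          + v₂ ^ 2 / (b - a * b * caustic a b p₁ p₂ v₁ v₂)) * (t - t₀) ^ 2 := by
  have ha : (0:ℝ) < a := hb.trans hba
  set l := a * b * caustic a b p₁ p₂ v₁ v₂ with hldef
  have hl2 : l = b * v₁ ^ 2 + a * v₂ ^ 2 - (v₁ * p₂ - p₁ * v₂) ^ 2 := by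
    rw [hldef]; unfold caustic; field_simp
  have hA : a - l ≠ 0 := sub_ne_zero.mpr hla.symm
  have hB : b - l ≠ 0 := sub_ne_zero.mpr hlb.symm
  have key : v₁ ^ 2 * (b - l) + v₂ ^ 2 * (a - l) = (v₁ * p₂ - p₁ * v₂) ^ 2 := by
    rw [hl2]
    linear_combination (-(b * v₁ ^ 2 + a * v₂ ^ 2 - (v₁ * p₂ - p₁ * v₂) ^ 2)) * hv
  refine ⟨-(p₁ * v₁ / (a - l) + p₂ * v₂ / (b - l)) /
      (v₁ ^ 2 / (a - l) + v₂ ^ 2 / (b - l)), fun t => ?_⟩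
  have hV' : v₁ ^ 2 * (b - l) + v₂ ^ 2 * (a - l) ≠ 0 := by
    intro h
    apply hV
    field_simp
    linear_combination h
  have hV'' : v₁ ^ 2 * (b - l) + (a - l) * v₂ ^ 2 ≠ 0 := by rwa [mul_comm (a - l)]
  field_simp
  linear_combination (-(a-l)*(b-l)) * key
end

section
/- For every point (x,y) ∈ ℝ² with x ≠ 0 and y ≠ 0, there exists a unique λ with λ < b such that x²/(a−λ) + y²/(b−λ) = 1. That is, through every point of the plane not lying on the coordinate axes there passes exactly one ellipse of the confocal family (Jacobi–Chasles, elliptic part). -/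
/-- Jacobi–Chasles (elliptic part): through every point of the plane not lying
on the coordinate axes there passes exactly one ellipse of the confocal family
`x²/(a−λ) + y²/(b−λ) = 1`, i.e. exactly one parameter `λ < b`. -/
theorem jacobi_chasles_ellipse (a b : ℝ) (hb : 0 < b) (hba : b < a)
    (x y : ℝ) (hx : x ≠ 0) (hy : y ≠ 0) :
    ∃! lam : ℝ, lam < b ∧ x ^ 2 / (a - lam) + y ^ 2 / (b - lam) = 1 := by
  have hx2 : 0 < x ^ 2 := by positivity
  have hy2 : 0 < y ^ 2 := by positivity
  have hD : (2 * b - (a + b - x ^ 2 - y ^ 2)) ^ 2 <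
      (a + b - x ^ 2 - y ^ 2) ^ 2 - 4 * (a * b - b * x ^ 2 - a * y ^ 2) := by nlinarith
  have hDnn : 0 ≤ (a + b - x ^ 2 - y ^ 2) ^ 2 - 4 * (a * b - b * x ^ 2 - a * y ^ 2) :=
    le_of_lt (lt_of_le_of_lt (sq_nonneg _) hD)
  set d : ℝ := Real.sqrt ((a + b - x ^ 2 - y ^ 2) ^ 2 - 4 * (a * b - b * x ^ 2 - a * y ^ 2))
    with hd
  have hd2 : d ^ 2 = (a + b - x ^ 2 - y ^ 2) ^ 2 - 4 * (a * b - b * x ^ 2 - a * y ^ 2) :=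
    Real.sq_sqrt hDnn
  have hdnn : 0 ≤ d := Real.sqrt_nonneg _
  have h1 : (a + b - x ^ 2 - y ^ 2) - d < 2 * b := by nlinarith
  have h2 : 2 * b < (a + b - x ^ 2 - y ^ 2) + d := by nlinarith
  refine ⟨((a + b - x ^ 2 - y ^ 2) - d) / 2, ⟨by linarith, ?_⟩, ?_⟩
  · have hlt : ((a + b - x ^ 2 - y ^ 2) - d) / 2 < b := by linarith
    have ha' : a - ((a + b - x ^ 2 - y ^ 2) - d) / 2 ≠ 0 := by
      have : ((a + b - x ^ 2 - y ^ 2) - d) / 2 < a := by linarith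
      intro h; nlinarith
    have hb' : b - ((a + b - x ^ 2 - y ^ 2) - d) / 2 ≠ 0 := by
      intro h; nlinarith
    rw [div_add_div _ _ ha' hb', div_eq_one_iff_eq (mul_ne_zero ha' hb')]
    linear_combination (-(1 : ℝ) / 4) * hd2
  · rintro μ ⟨hμb, hμeq⟩
    have ha' : a - μ ≠ 0 := by intro h; nlinarith
    have hb' : b - μ ≠ 0 := by intro h; nlinarith
    rw [div_add_div _ _ ha' hb', div_eq_one_iff_eq (mul_ne_zero ha' hb')] at hμeq
    have hg : μ ^ 2 - (a + b - x ^ 2 - y ^ 2) * μ + (a * b - b * x ^ 2 - a * y ^ 2) = 0 := by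
      linear_combination -hμeq
    have hfac : (2 * μ - (a + b - x ^ 2 - y ^ 2) + d) * (2 * μ - (a + b - x ^ 2 - y ^ 2) - d)
        = 0 := by linear_combination 4 * hg - hd2
    have hne : 2 * μ - (a + b - x ^ 2 - y ^ 2) - d < 0 := by linarith
    rcases mul_eq_zero.mp hfac with h | h
    · linarith
    · exact absurd h (ne_of_lt hne)
end

section
/- For every point (x,y) ∈ ℝ² with x ≠ 0 and y ≠ 0, there exists a unique λ with b < λ < a such that x²/(a−λ) + y²/(b−λ) = 1. That is, through every point of the plane not lying on the coordinate axes there passes exactly one hyperbola of the confocal family (Jacobi–Chasles, hyperbolic part). -/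
/-- Jacobi–Chasles (hyperbolic part): through every point of the plane not lying
on the coordinate axes there passes exactly one hyperbola of the confocal family
`x²/(a−λ) + y²/(b−λ) = 1`, i.e. exactly one parameter `λ` with `b < λ < a`. -/
theorem jacobi_chasles_hyperbola (a b : ℝ) (hb : 0 < b) (hba : b < a)
    (x y : ℝ) (hx : x ≠ 0) (hy : y ≠ 0) :
    ∃! lam : ℝ, (b < lam ∧ lam < a) ∧ x ^ 2 / (a - lam) + y ^ 2 / (b - lam) = 1 := by
  have hx2 : 0 < x ^ 2 := by positivity
  have hy2 : 0 < y ^ 2 := by positivity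
  set g : ℝ → ℝ := fun l => x ^ 2 * (b - l) + y ^ 2 * (a - l) - (a - l) * (b - l) with hg
  have hcont : ContinuousOn g (Set.Icc b a) := by
    apply Continuous.continuousOn; fun_prop
  have hgb : 0 < g b := by simp only [hg]; nlinarith
  have hga : g a < 0 := by simp only [hg]; nlinarith
  obtain ⟨c, hc, hc0⟩ := intermediate_value_Ioo' hba.le hcont ⟨hga, hgb⟩
  obtain ⟨hbc, hca⟩ := hc
  have hac : a - c ≠ 0 := by linarith [hca]
  have hbcne : b - c ≠ 0 := by linarith [hbc]
  have hc0' : x ^ 2 * (b - c) + y ^ 2 * (a - c) = (a - c) * (b - c) := by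
    have := hc0; simp only [hg] at this; linarith
  refine ⟨c, ⟨⟨hbc, hca⟩, ?_⟩, ?_⟩
  · field_simp
    linarith [hc0']
  · rintro l ⟨⟨hbl, hla⟩, hel⟩
    have hal : a - l ≠ 0 := by intro h; linarith [hla]; 
    have hbl' : b - l ≠ 0 := by intro h; linarith [hbl]
    have he1 : x ^ 2 * (b - l) + y ^ 2 * (a - l) = (a - l) * (b - l) := by
      field_simp at hel; linarith [hel]
    by_contra h
    rcases lt_or_gt_of_ne h with hlc | hlc
    · nlinarith [mul_pos_of_neg_of_neg (sub_neg.mpr hbl) (sub_neg.mpr hbc), mul_pos hy2 (sub_pos.mpr hba)]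
    · nlinarith [mul_pos_of_neg_of_neg (sub_neg.mpr hbl) (sub_neg.mpr hbc), mul_pos hy2 (sub_pos.mpr hba)]
end

section
/- Let p = (p₁,p₂) ∈ ℝ², let v = (v₁,v₂) be a unit vector (v₁² + v₂² = 1), and set λ = ab·Λ(p,v). If λ < b, then p₁²/(a−λ) + p₂²/(b−λ) ≥ 1; that is, when the caustic is an ellipse of the confocal family, every point of the trajectory lies outside or on that caustic ellipse (the region of possible motion lies outside the caustic). -/
/-- When the caustic is an ellipse of the confocal family (`λ = ab·Λ(p,v) < b`),
every point of the trajectory lies outside or on that caustic ellipse. -/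
theorem point_outside_elliptic_caustic (a b : ℝ) (hb : 0 < b) (hba : b < a)
    (p₁ p₂ v₁ v₂ : ℝ) (hv : v₁ ^ 2 + v₂ ^ 2 = 1)
    (hl : a * b * caustic a b p₁ p₂ v₁ v₂ < b) :
    p₁ ^ 2 / (a - a * b * caustic a b p₁ p₂ v₁ v₂)
      + p₂ ^ 2 / (b - a * b * caustic a b p₁ p₂ v₁ v₂) ≥ 1 := by
  have ha0 : (0:ℝ) < a := lt_trans hb hba
  have hL : a * b * caustic a b p₁ p₂ v₁ v₂
      = b * v₁ ^ 2 + a * v₂ ^ 2 - (v₁ * p₂ - p₁ * v₂) ^ 2 := by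
    unfold caustic
    field_simp
  rw [hL] at hl ⊢
  set L := b * v₁ ^ 2 + a * v₂ ^ 2 - (v₁ * p₂ - p₁ * v₂) ^ 2 with hLdef
  have hbL : 0 < b - L := by linarith
  have haL : 0 < a - L := by linarith
  rw [ge_iff_le, div_add_div _ _ (ne_of_gt haL) (ne_of_gt hbL),
    le_div_iff₀ (by positivity)]
  rw [hLdef]
  have key : p₁ ^ 2 * (b - (b * v₁ ^ 2 + a * v₂ ^ 2 - (v₁ * p₂ - p₁ * v₂) ^ 2))
      + (a - (b * v₁ ^ 2 + a * v₂ ^ 2 - (v₁ * p₂ - p₁ * v₂) ^ 2)) * p₂ ^ 2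
      - (a - (b * v₁ ^ 2 + a * v₂ ^ 2 - (v₁ * p₂ - p₁ * v₂) ^ 2))
        * (b - (b * v₁ ^ 2 + a * v₂ ^ 2 - (v₁ * p₂ - p₁ * v₂) ^ 2))
      = ((v₁ * p₂ - p₁ * v₂) * (p₁ * v₁ + p₂ * v₂) + (a - b) * v₁ * v₂) ^ 2 := by
    linear_combination (-p₂^4*v₁^2 + 2*p₁*p₂^3*v₁*v₂ - p₁^2*p₂^2*v₂^2 - p₁^2*p₂^2*v₁^2 + 2*p₁^3*p₂*v₁*v₂ - p₁^4*v₂^2 + 2*b*p₂^2*v₁^2 - 2*b*p₁*p₂*v₁*v₂ - b*p₁^2 - b^2*v₁^2 - a*p₂^2 - 2*a*p₁*p₂*v₁*v₂ + 2*a*p₁^2*v₂^2 + a*b - a^2*v₂^2) * hv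
  nlinarith [sq_nonneg ((v₁ * p₂ - p₁ * v₂) * (p₁ * v₁ + p₂ * v₂) + (a - b) * v₁ * v₂), key]
end

section
/- Let p = (p₁,p₂) ∈ ℝ², let v = (v₁,v₂) be a unit vector (v₁² + v₂² = 1), and set λ = ab·Λ(p,v). If b < λ < a, then p₁²/(a−λ) + p₂²/(b−λ) ≤ 1; that is, when the caustic is a hyperbola of the confocal family, every point of the trajectory lies in the closed region between the two branches of that hyperbola (the region of possible motion lies inside the caustic hyperbola). -/
/-- When the caustic is a hyperbola of the confocal family (`b < λ = ab·Λ(p,v) < a`),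
every point of the trajectory lies in the closed region between the two branches of
that hyperbola. -/
theorem point_inside_hyperbolic_caustic (a b : ℝ) (hb : 0 < b) (hba : b < a)
    (p₁ p₂ v₁ v₂ : ℝ) (hv : v₁ ^ 2 + v₂ ^ 2 = 1)
    (hlb : b < a * b * caustic a b p₁ p₂ v₁ v₂)
    (hla : a * b * caustic a b p₁ p₂ v₁ v₂ < a) :
    p₁ ^ 2 / (a - a * b * caustic a b p₁ p₂ v₁ v₂)
      + p₂ ^ 2 / (b - a * b * caustic a b p₁ p₂ v₁ v₂) ≤ 1 := by
  have ha : (0:ℝ) < a := lt_trans hb hba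
  have hL : a * b * caustic a b p₁ p₂ v₁ v₂
      = b * v₁ ^ 2 + a * v₂ ^ 2 - (v₁ * p₂ - p₁ * v₂) ^ 2 := by
    unfold caustic
    field_simp
  rw [hL] at hlb hla ⊢
  set L := b * v₁ ^ 2 + a * v₂ ^ 2 - (v₁ * p₂ - p₁ * v₂) ^ 2 with hLdef
  have hA : 0 < a - L := by linarith
  have hB : 0 < L - b := by linarith
  have hrw : p₁ ^ 2 / (a - L) + p₂ ^ 2 / (b - L)
      = (p₁ ^ 2 * (L - b) - p₂ ^ 2 * (a - L)) / ((a - L) * (L - b)) := by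
    rw [show b - L = -(L - b) by ring, div_neg]
    field_simp
    ring
  rw [hrw, div_le_one (mul_pos hA hB)]
  have key : p₁ ^ 2 * (L - b) - p₂ ^ 2 * (a - L) - (a - L) * (L - b)
      = -(((v₁ * p₁ + v₂ * p₂) * (v₁ * p₂ - p₁ * v₂) + (a - b) * v₁ * v₂) ^ 2) := by
    rw [hLdef]
    linear_combination ((a - b) * (p₂ ^ 2 * v₁ ^ 2 - p₁ ^ 2 * v₂ ^ 2)
      + (v₁ * p₂ - p₁ * v₂) ^ 2 * (p₁ ^ 2 + p₂ ^ 2)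
      - a * ((b - a) * v₂ ^ 2 + (v₁ * p₂ - p₁ * v₂) ^ 2)
      - b * ((a - b) * v₁ ^ 2 + (v₁ * p₂ - p₁ * v₂) ^ 2)
      - a * b * (1 - (v₁ ^ 2 + v₂ ^ 2)) + b * p₁ ^ 2 + a * p₂ ^ 2) * hv
  nlinarith [key, sq_nonneg ((v₁ * p₁ + v₂ * p₂) * (v₁ * p₂ - p₁ * v₂) + (a - b) * v₁ * v₂)]
end

section
/- Let p = (p₁,p₂) ∈ ℝ² and let v = (v₁,v₂) be a unit vector (v₁² + v₂² = 1). Then ab·Λ(p,v) = b if and only if there exists t ∈ ℝ with p + t·v = (√(a−b), 0) or p + t·v = (−√(a−b), 0). That is, the critical level ab·Λ = b consists exactly of the states whose trajectory line passes through one of the foci of the confocal family. -/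
/-- The critical level `ab·Λ = b` consists exactly of the states whose trajectory
line passes through one of the foci `(±√(a−b), 0)` of the confocal family. -/
theorem critical_level_through_focus (a b : ℝ) (hb : 0 < b) (hba : b < a)
    (p₁ p₂ v₁ v₂ : ℝ) (hv : v₁ ^ 2 + v₂ ^ 2 = 1) :
    a * b * caustic a b p₁ p₂ v₁ v₂ = b ↔
      ∃ t : ℝ,
        (p₁ + t * v₁ = Real.sqrt (a - b) ∧ p₂ + t * v₂ = 0) ∨
        (p₁ + t * v₁ = -Real.sqrt (a - b) ∧ p₂ + t * v₂ = 0) := by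
  have ha : a ≠ 0 := by linarith
  have hb' : b ≠ 0 := by linarith
  set c := Real.sqrt (a - b) with hc
  have hc2 : c ^ 2 = a - b := Real.sq_sqrt (by linarith)
  have hL : a * b * caustic a b p₁ p₂ v₁ v₂
      = b * v₁ ^ 2 + a * v₂ ^ 2 - (v₁ * p₂ - p₁ * v₂) ^ 2 := by
    unfold caustic; field_simp
  rw [hL]
  constructor
  · intro h
    have key : (v₁ * p₂ - p₁ * v₂ - c * v₂) * (v₁ * p₂ - p₁ * v₂ + c * v₂) = 0 := by
      nlinarith [hc2, hv]
    have hv1 : v₂ = 0 → v₁ ≠ 0 := by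
      intro h0 h1; rw [h0, h1] at hv; norm_num at hv
    rcases mul_eq_zero.mp key with h1 | h1
    · -- v₁p₂ − p₁v₂ = c v₂
      by_cases hv2 : v₂ = 0
      · have hp2 : p₂ = 0 := by
          have := hv1 hv2
          have : v₁ * p₂ = 0 := by rw [hv2] at h1; linarith [h1]
          exact (mul_eq_zero.mp this).resolve_left (hv1 hv2)
        exact ⟨(c - p₁) / v₁, Or.inl ⟨by field_simp [hv1 hv2]; ring, by simp [hv2, hp2]⟩⟩
      · refine ⟨-p₂ / v₂, Or.inr ⟨?_, by field_simp; ring⟩⟩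
        field_simp
        nlinarith [h1]
    · by_cases hv2 : v₂ = 0
      · have hp2 : p₂ = 0 := by
          have : v₁ * p₂ = 0 := by rw [hv2] at h1; linarith [h1]
          exact (mul_eq_zero.mp this).resolve_left (hv1 hv2)
        exact ⟨(c - p₁) / v₁, Or.inl ⟨by field_simp [hv1 hv2]; ring, by simp [hv2, hp2]⟩⟩
      · refine ⟨-p₂ / v₂, Or.inl ⟨?_, by field_simp; ring⟩⟩
        field_simp
        nlinarith [h1]
  · rintro ⟨t, ⟨h1, h2⟩ | ⟨h1, h2⟩⟩
    · have hx : v₁ * p₂ - p₁ * v₂ = -(c * v₂) := by linear_combination v₁ * h2 - v₂ * h1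
      linear_combination b * hv - v₂ ^ 2 * hc2 - (v₁ * p₂ - p₁ * v₂ - c * v₂) * hx
    · have hx : v₁ * p₂ - p₁ * v₂ = c * v₂ := by linear_combination v₁ * h2 - v₂ * h1
      linear_combination b * hv - v₂ ^ 2 * hc2 - (v₁ * p₂ - p₁ * v₂ + c * v₂) * hx
end

section
/- (Optical property of the ellipse.) Let λ < b, let p = (p₁,p₂) satisfy p₁²/(a−λ) + p₂²/(b−λ) = 1, and set c = √(a−b) and n = (p₁/(a−λ), p₂/(b−λ)). Suppose v ∈ ℝ² is nonzero and there exists t ∈ ℝ with p + t·v = (c, 0), i.e. the incoming trajectory line passes through the focus (c,0). Then the reflected velocity v' = v − 2·(⟨v,n⟩/⟨n,n⟩)·n satisfies: there exists s ∈ ℝ with p + s·v' = (−c, 0). That is, a trajectory through one focus reflects off the ellipse into a trajectory through the other focus. -/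
set_option maxHeartbeats 1000000 in
/-- Optical property of the ellipse: a trajectory through one focus of an ellipse
of the confocal family reflects off the ellipse into a trajectory through the
other focus. Here `n = (p₁/(a−λ), p₂/(b−λ))` is the normal to the ellipse at `p`
and the reflected velocity is `v' = v − 2(⟨v,n⟩/⟨n,n⟩)n`. -/
theorem ellipse_optical_property (a b : ℝ) (hb : 0 < b) (hba : b < a)
    (lam : ℝ) (hl : lam < b)
    (p₁ p₂ : ℝ) (hp : p₁ ^ 2 / (a - lam) + p₂ ^ 2 / (b - lam) = 1)
    (v₁ v₂ : ℝ) (hv : (v₁, v₂) ≠ ((0 : ℝ), (0 : ℝ)))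
    (hfocus : ∃ t : ℝ, p₁ + t * v₁ = Real.sqrt (a - b) ∧ p₂ + t * v₂ = 0) :
    ∃ s : ℝ,
      p₁ + s * (v₁ - 2 * ((v₁ * (p₁ / (a - lam)) + v₂ * (p₂ / (b - lam))) /
          ((p₁ / (a - lam)) * (p₁ / (a - lam)) + (p₂ / (b - lam)) * (p₂ / (b - lam)))) *
          (p₁ / (a - lam))) = -Real.sqrt (a - b) ∧
      p₂ + s * (v₂ - 2 * ((v₁ * (p₁ / (a - lam)) + v₂ * (p₂ / (b - lam))) /
          ((p₁ / (a - lam)) * (p₁ / (a - lam)) + (p₂ / (b - lam)) * (p₂ / (b - lam)))) *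
          (p₂ / (b - lam))) = 0 := by
  obtain ⟨t, ht1, ht2⟩ := hfocus
  have hc2' : Real.sqrt (a - b) ^ 2 = (a - lam) - (b - lam) := by
    rw [Real.sq_sqrt (by linarith : (0:ℝ) ≤ a - b)]; ring
  obtain ⟨c, hc⟩ : ∃ x : ℝ, Real.sqrt (a - b) = x := ⟨_, rfl⟩
  rw [hc] at ht1 hc2' ⊢
  obtain ⟨A, hAd⟩ : ∃ x : ℝ, a - lam = x := ⟨_, rfl⟩
  obtain ⟨B, hBd⟩ : ∃ x : ℝ, b - lam = x := ⟨_, rfl⟩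
  rw [hAd, hBd] at hp hc2' ⊢
  have hA : 0 < A := by rw [← hAd]; linarith
  have hB : 0 < B := by rw [← hBd]; linarith
  have hc2 : c ^ 2 = A - B := hc2'
  have hp' : p₁ ^ 2 * B + p₂ ^ 2 * A = A * B := by
    field_simp at hp; linarith
  have h1 : p₁ ^ 2 ≤ A := by nlinarith [sq_nonneg p₂, mul_pos hA hB]
  have hsq : (c * p₁) ^ 2 < A ^ 2 := by
    nlinarith [mul_nonneg (sub_nonneg.2 h1) (sq_nonneg c), mul_pos hA hB]
  have hAp : 0 < A + c * p₁ := by nlinarith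
  have hAm : 0 < A - c * p₁ := by nlinarith
  have ht0 : t ≠ 0 := by
    rintro rfl
    simp only [zero_mul, add_zero] at ht1 ht2
    subst ht1; subst ht2
    have hBB : B * B = 0 := by linear_combination B * hc2 - hp'
    nlinarith [hBB, hB]
  have hv₁ : t * v₁ = c - p₁ := by linarith
  have hv₂ : t * v₂ = -p₂ := by linarith
  have e1 : v₁ = (c - p₁) / t := by field_simp; linarith
  have e2 : v₂ = -p₂ / t := by field_simp; linarith
  have hcpA : c * p₁ - A ≠ 0 := by nlinarith
  have hip : v₁ * (p₁ / A) + v₂ * (p₂ / B) = (c * p₁ - A) / (A * t) := by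
    rw [e1, e2]
    field_simp
    linear_combination (-1) * hp'
  have hnn_eq : p₁ / A * (p₁ / A) + p₂ / B * (p₂ / B)
      = (A - c * p₁) * (A + c * p₁) / (A ^ 2 * B) := by
    field_simp
    linear_combination A * hp' + B * p₁ ^ 2 * hc2
  have hD : (v₁ * (p₁ / A) + v₂ * (p₂ / B)) /
      (p₁ / A * (p₁ / A) + p₂ / B * (p₂ / B)) = -(A * B) / (t * (A + c * p₁)) := by
    rw [hip, hnn_eq]
    field_simp
    ring
  refine ⟨t * (A + c * p₁) / (c * p₁ - A), ?_, ?_⟩ <;> rw [hD]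
  · rw [e1]
    have hD2 : A + p₁ * c ≠ 0 := by nlinarith
    have hE2 : p₁ * c - A ≠ 0 := by nlinarith
    field_simp
    linear_combination 2 * p₁ * hc2
  · rw [e2]
    field_simp
    ring
end

section
/- Let λ < b and let p = (p₁,p₂) satisfy p₁²/(a−λ) + p₂²/(b−λ) > 1 (p lies strictly outside the confocal ellipse with parameter λ). Then the set { v = (v₁,v₂) ∈ ℝ² : v₁² + v₂² = 1 and b·v₁² + a·v₂² − (v₁p₂ − p₁v₂)² = λ } has exactly 4 elements. That is, at every point strictly outside an elliptic caustic there are exactly four unit velocity vectors with that caustic (two tangent lines, each with two orientations). -/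
lemma line_circle (α β : ℝ) (h : ¬ (α = 0 ∧ β = 0)) :
    {v : ℝ × ℝ | v.1 ^ 2 + v.2 ^ 2 = 1 ∧ α * v.1 + β * v.2 = 0} =
      {(β / Real.sqrt (α ^ 2 + β ^ 2), -α / Real.sqrt (α ^ 2 + β ^ 2)),
       (-β / Real.sqrt (α ^ 2 + β ^ 2), α / Real.sqrt (α ^ 2 + β ^ 2))} := by
  have hpos : 0 < α ^ 2 + β ^ 2 := by
    rcases not_and_or.mp h with h | h
    · have : α ^ 2 > 0 := by positivity
      nlinarith [sq_nonneg β]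
    · have : β ^ 2 > 0 := by positivity
      nlinarith [sq_nonneg α]
  set n := Real.sqrt (α ^ 2 + β ^ 2) with hn
  have hn0 : 0 < n := Real.sqrt_pos.mpr hpos
  have hn2 : n ^ 2 = α ^ 2 + β ^ 2 := Real.sq_sqrt hpos.le
  ext v
  simp only [Set.mem_setOf_eq, Set.mem_insert_iff, Set.mem_singleton_iff, Prod.ext_iff]
  constructor
  · rintro ⟨hu, hl⟩
    have ht : (v.1 * β - v.2 * α - n) * (v.1 * β - v.2 * α + n) = 0 := by nlinarith
    rcases mul_eq_zero.mp ht with ht | ht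
    · left
      have htn : v.1 * β - v.2 * α = n := by linarith
      refine ⟨?_, ?_⟩ <;> rw [eq_div_iff hn0.ne']
      · linear_combination (-v.1) * htn + β * hu - v.2 * hl
      · linear_combination (-v.2) * htn - α * hu + v.1 * hl
    · right
      have htn : v.1 * β - v.2 * α = -n := by linarith
      refine ⟨?_, ?_⟩ <;> rw [eq_div_iff hn0.ne']
      · linear_combination v.1 * htn - β * hu + v.2 * hl
      · linear_combination v.2 * htn + α * hu - v.1 * hl
  · rintro (⟨h1, h2⟩ | ⟨h1, h2⟩) <;> rw [h1, h2] <;> refine ⟨?_, ?_⟩ <;>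
      field_simp <;> try ring
    · linarith [hn2]
    · linarith [hn2]


lemma two_lines_circle (α₁ β₁ α₂ β₂ : ℝ) (hdet : α₁ * β₂ - α₂ * β₁ ≠ 0) :
    Set.ncard {v : ℝ × ℝ | v.1 ^ 2 + v.2 ^ 2 = 1 ∧
      (α₁ * v.1 + β₁ * v.2) * (α₂ * v.1 + β₂ * v.2) = 0} = 4 := by
  have h1 : ¬ (α₁ = 0 ∧ β₁ = 0) := by rintro ⟨rfl, rfl⟩; simp at hdet
  have h2 : ¬ (α₂ = 0 ∧ β₂ = 0) := by rintro ⟨rfl, rfl⟩; simp at hdet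
  set n₁ := Real.sqrt (α₁ ^ 2 + β₁ ^ 2) with hn1
  set n₂ := Real.sqrt (α₂ ^ 2 + β₂ ^ 2) with hn2
  have hp1 : 0 < α₁ ^ 2 + β₁ ^ 2 := by
    rcases not_and_or.mp h1 with h | h <;> positivity
  have hp2 : 0 < α₂ ^ 2 + β₂ ^ 2 := by
    rcases not_and_or.mp h2 with h | h <;> positivity
  have hn01 : 0 < n₁ := Real.sqrt_pos.mpr hp1
  have hn02 : 0 < n₂ := Real.sqrt_pos.mpr hp2
  have hset : {v : ℝ × ℝ | v.1 ^ 2 + v.2 ^ 2 = 1 ∧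
      (α₁ * v.1 + β₁ * v.2) * (α₂ * v.1 + β₂ * v.2) = 0} =
      {v : ℝ × ℝ | v.1 ^ 2 + v.2 ^ 2 = 1 ∧ α₁ * v.1 + β₁ * v.2 = 0} ∪
      {v : ℝ × ℝ | v.1 ^ 2 + v.2 ^ 2 = 1 ∧ α₂ * v.1 + β₂ * v.2 = 0} := by
    ext v
    simp only [Set.mem_setOf_eq, Set.mem_union, mul_eq_zero]
    tauto
  rw [hset, line_circle _ _ h1, line_circle _ _ h2, ← hn1, ← hn2,
    Set.insert_union, Set.singleton_union]
  -- distinctness facts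
  have key : ∀ x1 y1 : ℝ, α₁ * x1 + β₁ * y1 ≠ 0 →
      ((β₁ / n₁, -α₁ / n₁) : ℝ × ℝ) ≠ (x1, y1) ∧
      ((-β₁ / n₁, α₁ / n₁) : ℝ × ℝ) ≠ (x1, y1) := by
    intro x1 y1 hxy
    constructor <;>
      (intro h; rw [Prod.mk.injEq] at h; obtain ⟨e1, e2⟩ := h; apply hxy;
       rw [← e1, ← e2]; field_simp; try ring)
  have hdn : (α₁ * β₂ - α₂ * β₁) / n₂ ≠ 0 := div_ne_zero hdet hn02.ne'
  have hd2 : α₁ * (β₂ / n₂) + β₁ * (-α₂ / n₂) ≠ 0 := by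
    intro hz; apply hdn; rw [← hz]; ring
  have hd2' : α₁ * (-β₂ / n₂) + β₁ * (α₂ / n₂) ≠ 0 := by
    intro hz
    apply neg_ne_zero.mpr hdn
    rw [← hz]; ring
  have hself1 : ((β₁ / n₁, -α₁ / n₁) : ℝ × ℝ) ≠ (-β₁ / n₁, α₁ / n₁) := by
    rintro h
    rw [Prod.mk.injEq, div_eq_div_iff hn01.ne' hn01.ne',
      div_eq_div_iff hn01.ne' hn01.ne'] at h
    obtain ⟨e1, e2⟩ := h
    apply h1
    constructor <;> nlinarith
  have hself2 : ((β₂ / n₂, -α₂ / n₂) : ℝ × ℝ) ≠ (-β₂ / n₂, α₂ / n₂) := by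
    rintro h
    rw [Prod.mk.injEq, div_eq_div_iff hn02.ne' hn02.ne',
      div_eq_div_iff hn02.ne' hn02.ne'] at h
    obtain ⟨e1, e2⟩ := h
    apply h2
    constructor <;> nlinarith
  have k1 := key _ _ hd2
  have k2 := key _ _ hd2'
  rw [Set.ncard_insert_of_notMem (by
      simp only [Set.mem_insert_iff, Set.mem_singleton_iff]
      push_neg
      exact ⟨hself1, k1.1, k2.1⟩),
    Set.ncard_insert_of_notMem (by
      simp only [Set.mem_insert_iff, Set.mem_singleton_iff]
      push_neg
      exact ⟨k1.2, k2.2⟩),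
    Set.ncard_pair hself2]


lemma quad_circle (A B C : ℝ) (hD : 0 < B ^ 2 - A * C) :
    Set.ncard {v : ℝ × ℝ | v.1 ^ 2 + v.2 ^ 2 = 1 ∧
      A * v.1 ^ 2 + 2 * B * v.1 * v.2 + C * v.2 ^ 2 = 0} = 4 := by
  rcases eq_or_ne A 0 with rfl | hA
  · have hB : B ≠ 0 := by intro h; rw [h] at hD; nlinarith
    have hs : {v : ℝ × ℝ | v.1 ^ 2 + v.2 ^ 2 = 1 ∧
        0 * v.1 ^ 2 + 2 * B * v.1 * v.2 + C * v.2 ^ 2 = 0} =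
        {v : ℝ × ℝ | v.1 ^ 2 + v.2 ^ 2 = 1 ∧
        (0 * v.1 + 1 * v.2) * (2 * B * v.1 + C * v.2) = 0} := by
      ext v
      simp only [Set.mem_setOf_eq]
      constructor <;> rintro ⟨e1, e2⟩ <;> exact ⟨e1, by linear_combination e2⟩
    rw [hs]
    exact two_lines_circle 0 1 (2 * B) C (by
      intro h
      apply hB
      linarith)
  · set s := Real.sqrt (B ^ 2 - A * C) with hsdef
    have hs0 : 0 < s := Real.sqrt_pos.mpr hD
    have hs2 : s ^ 2 = B ^ 2 - A * C := Real.sq_sqrt hD.le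
    have hs : {v : ℝ × ℝ | v.1 ^ 2 + v.2 ^ 2 = 1 ∧
        A * v.1 ^ 2 + 2 * B * v.1 * v.2 + C * v.2 ^ 2 = 0} =
        {v : ℝ × ℝ | v.1 ^ 2 + v.2 ^ 2 = 1 ∧
        (A * v.1 + (B - s) * v.2) * (A * v.1 + (B + s) * v.2) = 0} := by
      ext v
      simp only [Set.mem_setOf_eq]
      constructor <;> rintro ⟨e1, e2⟩
      · exact ⟨e1, by linear_combination A * e2 - v.2 ^ 2 * hs2⟩
      · refine ⟨e1, ?_⟩
        have h3 : A * (A * v.1 ^ 2 + 2 * B * v.1 * v.2 + C * v.2 ^ 2) = 0 := by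
          linear_combination e2 + v.2 ^ 2 * hs2
        exact (mul_eq_zero.mp h3).resolve_left hA
    rw [hs]
    refine two_lines_circle A (B - s) A (B + s) ?_
    intro h
    have : A * (2 * s) = 0 := by linarith
    rcases mul_eq_zero.mp this with h' | h'
    · exact hA h'
    · linarith

/-- At every point strictly outside an elliptic caustic (`λ < b`) there are
exactly four unit velocity vectors with that caustic (two tangent lines to the
caustic through the point, each with two orientations). -/
theorem four_velocities_outside_elliptic_caustic (a b : ℝ) (hb : 0 < b) (hba : b < a)
    (lam : ℝ) (hl : lam < b)
    (p₁ p₂ : ℝ) (hp : p₁ ^ 2 / (a - lam) + p₂ ^ 2 / (b - lam) > 1) :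
    Set.ncard {v : ℝ × ℝ | v.1 ^ 2 + v.2 ^ 2 = 1 ∧
      b * v.1 ^ 2 + a * v.2 ^ 2 - (v.1 * p₂ - p₁ * v.2) ^ 2 = lam} = 4 := by
  have hbl : 0 < b - lam := by linarith
  have hal : 0 < a - lam := by linarith
  have hp' : (a - lam) * (b - lam) < p₁ ^ 2 * (b - lam) + p₂ ^ 2 * (a - lam) := by
    rw [gt_iff_lt, div_add_div _ _ hal.ne' hbl.ne',
      lt_div_iff₀ (mul_pos hal hbl), one_mul] at hp
    nlinarith
  have hD : 0 < (p₁ * p₂) ^ 2 - (b - lam - p₂ ^ 2) * (a - lam - p₁ ^ 2) := by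
    nlinarith
  have hs : {v : ℝ × ℝ | v.1 ^ 2 + v.2 ^ 2 = 1 ∧
      b * v.1 ^ 2 + a * v.2 ^ 2 - (v.1 * p₂ - p₁ * v.2) ^ 2 = lam} =
      {v : ℝ × ℝ | v.1 ^ 2 + v.2 ^ 2 = 1 ∧
      (b - lam - p₂ ^ 2) * v.1 ^ 2 + 2 * (p₁ * p₂) * v.1 * v.2 +
        (a - lam - p₁ ^ 2) * v.2 ^ 2 = 0} := by
    ext v
    simp only [Set.mem_setOf_eq]
    constructor <;> rintro ⟨e1, e2⟩
    · exact ⟨e1, by linear_combination e2 - lam * e1⟩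
    · exact ⟨e1, by linear_combination e2 + lam * e1⟩
  rw [hs]
  exact quad_circle _ _ _ hD
end

section
/- Let b < λ < a and let p = (p₁,p₂) satisfy p₁²/(a−λ) + p₂²/(b−λ) < 1 (p lies strictly between the branches of the confocal hyperbola with parameter λ). Then the set { v = (v₁,v₂) ∈ ℝ² : v₁² + v₂² = 1 and b·v₁² + a·v₂² − (v₁p₂ − p₁v₂)² = λ } has exactly 4 elements. That is, at every point strictly inside a hyperbolic caustic there are exactly four unit velocity vectors with that caustic. -/
set_option maxHeartbeats 1000000


/-- At every point strictly inside a hyperbolic caustic (`b < λ < a`) there are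
exactly four unit velocity vectors with that caustic. -/
theorem four_velocities_inside_hyperbolic_caustic (a b : ℝ) (hb : 0 < b) (hba : b < a)
    (lam : ℝ) (hlb : b < lam) (hla : lam < a)
    (p₁ p₂ : ℝ) (hp : p₁ ^ 2 / (a - lam) + p₂ ^ 2 / (b - lam) < 1) :
    Set.ncard {v : ℝ × ℝ | v.1 ^ 2 + v.2 ^ 2 = 1 ∧
      b * v.1 ^ 2 + a * v.2 ^ 2 - (v.1 * p₂ - p₁ * v.2) ^ 2 = lam} = 4 := by
  have hal : (0:ℝ) < a - lam := by linarith
  have hbl : b - lam < 0 := by linarith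
  obtain ⟨A, hA⟩ : ∃ x : ℝ, x = b - lam - p₂ ^ 2 := ⟨_, rfl⟩
  obtain ⟨B, hB⟩ : ∃ x : ℝ, x = p₁ * p₂ := ⟨_, rfl⟩
  obtain ⟨C, hC⟩ : ∃ x : ℝ, x = a - lam - p₁ ^ 2 := ⟨_, rfl⟩
  have hAneg : A < 0 := by rw [hA]; linarith [sq_nonneg p₂]
  have hA0 : A ≠ 0 := ne_of_lt hAneg
  -- discriminant positivity
  have hX : p₁^2/(a-lam) * (a-lam) = p₁^2 := div_mul_cancel₀ _ hal.ne'
  have hY : p₂^2/(b-lam) * (b-lam) = p₂^2 := div_mul_cancel₀ _ hbl.ne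
  have hprod0 : 0 < ((a-lam)*(b-lam)) * (p₁^2/(a-lam) + p₂^2/(b-lam) - 1) :=
    mul_pos_of_neg_of_neg (mul_neg_of_pos_of_neg hal hbl) (by linarith)
  have hrw : (b-lam)*p₁^2 + (a-lam)*p₂^2 - (a-lam)*(b-lam)
      = ((a-lam)*(b-lam)) * (p₁^2/(a-lam) + p₂^2/(b-lam) - 1) := by
    linear_combination (-(b-lam))*hX + (-(a-lam))*hY
  have hprod : 0 < (b-lam)*p₁^2 + (a-lam)*p₂^2 - (a-lam)*(b-lam) := by
    rw [hrw]; exact hprod0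
  have hD : 0 < B^2 - A*C := by
    have h : B^2 - A*C = (b-lam)*p₁^2 + (a-lam)*p₂^2 - (a-lam)*(b-lam) := by
      rw [hA, hB, hC]; ring
    rw [h]; exact hprod
  obtain ⟨s, hs⟩ : ∃ x : ℝ, x = Real.sqrt (B^2 - A*C) := ⟨_, rfl⟩
  have hspos : 0 < s := by rw [hs]; exact Real.sqrt_pos.2 hD
  have hs2 : s^2 = B^2 - A*C := by rw [hs]; exact Real.sq_sqrt hD.le
  -- the two roots
  obtain ⟨rp, hrp⟩ : ∃ x : ℝ, A * x = -B + s := ⟨(-B+s)/A, by field_simp⟩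
  obtain ⟨rm, hrm⟩ : ∃ x : ℝ, A * x = -B - s := ⟨(-B-s)/A, by field_simp⟩
  have hrprm : rp ≠ rm := by
    intro h
    rw [h] at hrp
    rw [hrp] at hrm
    linarith
  have hfac : ∀ r : ℝ, A*(A*r^2 + 2*B*r + C) = (A*r - (-B+s))*(A*r - (-B-s)) := by
    intro r
    linear_combination hs2
  have hrootp : A*rp^2 + 2*B*rp + C = 0 := by
    have h := hfac rp
    rw [hrp] at h
    simp only [sub_self, zero_mul] at h
    rcases mul_eq_zero.1 h with h' | h'
    · exact absurd h' hA0
    · exact h'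
  have hrootm : A*rm^2 + 2*B*rm + C = 0 := by
    have h := hfac rm
    rw [hrm] at h
    simp only [sub_self, mul_zero] at h
    rcases mul_eq_zero.1 h with h' | h'
    · exact absurd h' hA0
    · exact h'
  -- the square roots for normalization
  obtain ⟨Tp, hTp⟩ : ∃ x : ℝ, x = (Real.sqrt (1 + rp^2))⁻¹ := ⟨_, rfl⟩
  obtain ⟨Tm, hTm⟩ : ∃ x : ℝ, x = (Real.sqrt (1 + rm^2))⁻¹ := ⟨_, rfl⟩
  have h1rp : (0:ℝ) < 1 + rp^2 := by positivity
  have h1rm : (0:ℝ) < 1 + rm^2 := by positivity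
  have hTppos : 0 < Tp := by rw [hTp]; positivity
  have hTmpos : 0 < Tm := by rw [hTm]; positivity
  have hTp2 : Tp^2 * (1 + rp^2) = 1 := by
    rw [hTp, ← Real.sqrt_inv, Real.sq_sqrt (by positivity)]
    field_simp
  have hTm2 : Tm^2 * (1 + rm^2) = 1 := by
    rw [hTm, ← Real.sqrt_inv, Real.sq_sqrt (by positivity)]
    field_simp
  -- the set equals an explicit four-point set
  have hSeq : {v : ℝ × ℝ | v.1 ^ 2 + v.2 ^ 2 = 1 ∧
      b * v.1 ^ 2 + a * v.2 ^ 2 - (v.1 * p₂ - p₁ * v.2) ^ 2 = lam}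
      = {((rp*Tp, Tp) : ℝ × ℝ), (-(rp*Tp), -Tp), (rm*Tm, Tm), (-(rm*Tm), -Tm)} := by
    ext v
    simp only [Set.mem_setOf_eq, Set.mem_insert_iff, Set.mem_singleton_iff, Prod.ext_iff]
    constructor
    · rintro ⟨h1, h2⟩
      have hQ : A*v.1^2 + 2*B*v.1*v.2 + C*v.2^2 = 0 := by
        linear_combination h2 - lam*h1 + v.1^2*hA + 2*v.1*v.2*hB + v.2^2*hC
      have hv2 : v.2 ≠ 0 := by
        intro h
        rw [h] at hQ h1
        apply hA0
        have hv1sq : v.1^2 = 1 := by linear_combination h1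
        linear_combination hQ - A * hv1sq
      -- factor the quadratic form
      have hfacv : (A*v.1 - (-B+s)*v.2)*(A*v.1 - (-B-s)*v.2) = 0 := by
        linear_combination A*hQ - v.2^2*hs2
      rcases mul_eq_zero.1 hfacv with h | h
      · -- v.1 = rp * v.2
        have hv1 : v.1 = rp * v.2 :=
          mul_left_cancel₀ hA0 (by linear_combination h - v.2 * hrp)
        have h1' : v.2^2 * (1 + rp^2) = 1 := by
          rw [hv1] at h1
          linear_combination h1
        have hsq : v.2^2 = Tp^2 := by
          have := h1'.trans hTp2.symm
          exact mul_right_cancel₀ (ne_of_gt h1rp) this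
        rcases sq_eq_sq_iff_eq_or_eq_neg.1 hsq with h2' | h2'
        · exact Or.inl ⟨by rw [hv1, h2'], h2'⟩
        · exact Or.inr (Or.inl ⟨by rw [hv1, h2']; ring, h2'⟩)
      · -- v.1 = rm * v.2
        have hv1 : v.1 = rm * v.2 :=
          mul_left_cancel₀ hA0 (by linear_combination h - v.2 * hrm)
        have h1' : v.2^2 * (1 + rm^2) = 1 := by
          rw [hv1] at h1
          linear_combination h1
        have hsq : v.2^2 = Tm^2 := by
          have := h1'.trans hTm2.symm
          exact mul_right_cancel₀ (ne_of_gt h1rm) this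
        rcases sq_eq_sq_iff_eq_or_eq_neg.1 hsq with h2' | h2'
        · exact Or.inr (Or.inr (Or.inl ⟨by rw [hv1, h2'], h2'⟩))
        · exact Or.inr (Or.inr (Or.inr ⟨by rw [hv1, h2']; ring, h2'⟩))
    · rintro (⟨hx, hy⟩ | ⟨hx, hy⟩ | ⟨hx, hy⟩ | ⟨hx, hy⟩) <;> rw [hx, hy] <;>
      constructor
      · linear_combination hTp2
      · linear_combination lam*hTp2 + Tp^2*hrootp - rp^2*Tp^2*hA - 2*rp*Tp^2*hB - Tp^2*hC
      · linear_combination hTp2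
      · linear_combination lam*hTp2 + Tp^2*hrootp - rp^2*Tp^2*hA - 2*rp*Tp^2*hB - Tp^2*hC
      · linear_combination hTm2
      · linear_combination lam*hTm2 + Tm^2*hrootm - rm^2*Tm^2*hA - 2*rm*Tm^2*hB - Tm^2*hC
      · linear_combination hTm2
      · linear_combination lam*hTm2 + Tm^2*hrootm - rm^2*Tm^2*hA - 2*rm*Tm^2*hB - Tm^2*hC
  rw [hSeq]
  have hne12 : ((rp*Tp, Tp) : ℝ × ℝ) ≠ (-(rp*Tp), -Tp) := by
    simp only [ne_eq, Prod.ext_iff, not_and]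
    intro _
    linarith
  have hne13 : ((rp*Tp, Tp) : ℝ × ℝ) ≠ (rm*Tm, Tm) := by
    simp only [ne_eq, Prod.ext_iff, not_and]
    intro h1 h2
    apply hrprm
    rw [h2] at h1
    exact mul_right_cancel₀ (ne_of_gt hTmpos) h1
  have hne14 : ((rp*Tp, Tp) : ℝ × ℝ) ≠ (-(rm*Tm), -Tm) := by
    simp only [ne_eq, Prod.ext_iff, not_and]
    intro _
    linarith
  have hne23 : ((-(rp*Tp), -Tp) : ℝ × ℝ) ≠ (rm*Tm, Tm) := by
    simp only [ne_eq, Prod.ext_iff, not_and]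
    intro _
    linarith
  have hne24 : ((-(rp*Tp), -Tp) : ℝ × ℝ) ≠ (-(rm*Tm), -Tm) := by
    simp only [ne_eq, Prod.ext_iff, not_and]
    intro h1 h2
    apply hrprm
    have h2' : Tp = Tm := by linarith
    rw [h2'] at h1
    have : rp * Tm = rm * Tm := by linarith
    exact mul_right_cancel₀ (ne_of_gt hTmpos) this
  have hne34 : ((rm*Tm, Tm) : ℝ × ℝ) ≠ (-(rm*Tm), -Tm) := by
    simp only [ne_eq, Prod.ext_iff, not_and]
    intro _
    linarith
  rw [Set.ncard_insert_of_notMem (by simp [hne12, hne13, hne14]),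
    Set.ncard_insert_of_notMem (by simp [hne23, hne24]),
    Set.ncard_insert_of_notMem (by simp [hne34]),
    Set.ncard_singleton]
end

section
/- Let λ < b and let p = (p₁,p₂) satisfy p₁²/(a−λ) + p₂²/(b−λ) = 1 (p lies on the confocal ellipse with parameter λ). Then the set { v = (v₁,v₂) ∈ ℝ² : v₁² + v₂² = 1 and b·v₁² + a·v₂² − (v₁p₂ − p₁v₂)² = λ } has exactly 2 elements. That is, at a point of the caustic itself there are exactly two unit velocity vectors with that caustic (the two orientations of the tangent direction). -/
/-- At a point of an elliptic caustic itself (`λ < b`) there are exactly two unit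
velocity vectors with that caustic (the two orientations of the tangent direction). -/
theorem two_velocities_on_elliptic_caustic (a b : ℝ) (hb : 0 < b) (hba : b < a)
    (lam : ℝ) (hl : lam < b)
    (p₁ p₂ : ℝ) (hp : p₁ ^ 2 / (a - lam) + p₂ ^ 2 / (b - lam) = 1) :
    Set.ncard {v : ℝ × ℝ | v.1 ^ 2 + v.2 ^ 2 = 1 ∧
      b * v.1 ^ 2 + a * v.2 ^ 2 - (v.1 * p₂ - p₁ * v.2) ^ 2 = lam} = 2 := by
  set A := a - lam with hA
  set B := b - lam with hBdef
  set c₁ := B * p₁ with hc1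
  set c₂ := A * p₂ with hc2
  clear_value A B c₁ c₂
  have hA0 : 0 < A := by rw [hA]; linarith
  have hB0 : 0 < B := by rw [hBdef]; linarith
  have hK : B * p₁ ^ 2 + A * p₂ ^ 2 = A * B := by
    field_simp at hp; linarith
  have hBA : B ≤ A := by rw [hA, hBdef]; linarith
  have hR : 0 < c₁ ^ 2 + c₂ ^ 2 := by
    have hdec : c₁ ^ 2 + c₂ ^ 2 = B * (B * p₁ ^ 2 + A * p₂ ^ 2) + A * (A - B) * p₂ ^ 2 := by
      rw [hc1, hc2]; ring
    rw [hdec, hK]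
    have h1 : 0 < B * (A * B) := by positivity
    have h2 : 0 ≤ A * (A - B) * p₂ ^ 2 := by
      apply mul_nonneg; apply mul_nonneg hA0.le; linarith; positivity
    linarith
  obtain ⟨r, hr0, hr2⟩ : ∃ r : ℝ, 0 < r ∧ r ^ 2 = c₁ ^ 2 + c₂ ^ 2 :=
    ⟨Real.sqrt _, Real.sqrt_pos.2 hR, Real.sq_sqrt hR.le⟩
  have main : ∀ v₁ v₂ : ℝ, v₁ ^ 2 + v₂ ^ 2 = 1 →
      (b * v₁ ^ 2 + a * v₂ ^ 2 - (v₁ * p₂ - p₁ * v₂) ^ 2 = lam ↔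
        c₁ * v₁ + c₂ * v₂ = 0) := by
    intro v₁ v₂ hu
    have hid : (c₁ * v₁ + c₂ * v₂) ^ 2
        = A * B * (B * v₁ ^ 2 + A * v₂ ^ 2 - (v₁ * p₂ - p₁ * v₂) ^ 2) := by
      rw [hc1, hc2]
      linear_combination (B * v₁ ^ 2 + A * v₂ ^ 2) * hK
    constructor
    · intro h
      have h0 : B * v₁ ^ 2 + A * v₂ ^ 2 - (v₁ * p₂ - p₁ * v₂) ^ 2 = 0 := by
        rw [hA, hBdef]; linear_combination h - lam * hu
      have : (c₁ * v₁ + c₂ * v₂) ^ 2 = 0 := by rw [hid, h0]; ring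
      exact pow_eq_zero_iff (by norm_num) |>.mp this
    · intro h
      have h0 : B * v₁ ^ 2 + A * v₂ ^ 2 - (v₁ * p₂ - p₁ * v₂) ^ 2 = 0 := by
        have h2 : A * B * (B * v₁ ^ 2 + A * v₂ ^ 2 - (v₁ * p₂ - p₁ * v₂) ^ 2) = 0 := by
          rw [← hid, h]; ring
        exact (mul_eq_zero.mp h2).resolve_left (mul_ne_zero hA0.ne' hB0.ne')
      rw [hA, hBdef] at h0; linear_combination h0 + lam * hu
  have hset : {v : ℝ × ℝ | v.1 ^ 2 + v.2 ^ 2 = 1 ∧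
      b * v.1 ^ 2 + a * v.2 ^ 2 - (v.1 * p₂ - p₁ * v.2) ^ 2 = lam}
      = {((c₂ / r, -c₁ / r) : ℝ × ℝ), (-c₂ / r, c₁ / r)} := by
    ext ⟨v₁, v₂⟩
    simp only [Set.mem_setOf_eq, Set.mem_insert_iff, Set.mem_singleton_iff, Prod.mk.injEq]
    constructor
    · rintro ⟨hu, heq⟩
      have hlin : c₁ * v₁ + c₂ * v₂ = 0 := (main v₁ v₂ hu).mp heq
      set s := c₂ * v₁ - c₁ * v₂ with hs
      have hs2 : s ^ 2 = r ^ 2 := by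
        rw [hr2, hs]
        linear_combination (c₁ ^ 2 + c₂ ^ 2) * hu - (c₁ * v₁ + c₂ * v₂) * hlin
      have hv1 : r ^ 2 * v₁ = c₂ * s := by
        rw [hr2, hs]; linear_combination c₁ * hlin
      have hv2 : r ^ 2 * v₂ = -c₁ * s := by
        rw [hr2, hs]; linear_combination c₂ * hlin
      have hcase : (s - r) * (s + r) = 0 := by linear_combination hs2
      rcases mul_eq_zero.mp hcase with h | h
      · left
        have hsr : s = r := by linarith
        rw [hsr] at hv1 hv2
        constructor
        · rw [eq_div_iff hr0.ne']
          exact mul_left_cancel₀ hr0.ne' (by linear_combination hv1)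
        · rw [eq_div_iff hr0.ne']
          exact mul_left_cancel₀ hr0.ne' (by linear_combination hv2)
      · right
        have hsr : s = -r := by linarith
        rw [hsr] at hv1 hv2
        constructor
        · rw [eq_div_iff hr0.ne']
          exact mul_left_cancel₀ hr0.ne' (by linear_combination hv1)
        · rw [eq_div_iff hr0.ne']
          exact mul_left_cancel₀ hr0.ne' (by linear_combination hv2)
    · rintro (⟨h1, h2⟩ | ⟨h1, h2⟩) <;> subst h1 <;> subst h2
      · have hu : (c₂ / r) ^ 2 + (-c₁ / r) ^ 2 = 1 := by
          rw [div_pow, div_pow, ← add_div, div_eq_one_iff_eq (by positivity)]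
          rw [hr2]; ring
        exact ⟨hu, (main _ _ hu).mpr (by field_simp; ring)⟩
      · have hu : (-c₂ / r) ^ 2 + (c₁ / r) ^ 2 = 1 := by
          rw [div_pow, div_pow, ← add_div, div_eq_one_iff_eq (by positivity)]
          rw [hr2]; ring
        exact ⟨hu, (main _ _ hu).mpr (by field_simp; ring)⟩
  rw [hset]
  refine Set.ncard_pair ?_
  intro h
  rw [Prod.mk.injEq] at h
  obtain ⟨h1, h2⟩ := h
  rw [div_eq_div_iff hr0.ne' hr0.ne'] at h1 h2
  have hc2z : c₂ = 0 := by
    have := mul_right_cancel₀ hr0.ne' (by linarith : c₂ * r = -c₂ * r) 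
    linarith
  have hc1z : c₁ = 0 := by
    have := mul_right_cancel₀ hr0.ne' (by linarith : c₁ * r = -c₁ * r)
    linarith
  rw [hc1z, hc2z] at hR; norm_num at hR
end

section
/- Let p = (p₁,p₂) ∈ ℝ². Then Λ(p,v) > 0 for every nonzero v ∈ ℝ² if and only if p₁²/a + p₂²/b < 1, i.e. the quadratic form v ↦ Λ(p,v) is positive definite exactly when p lies strictly inside the ellipse of the confocal family with parameter λ = 0. -/
lemma caustic_eq (a b p₁ p₂ v₁ v₂ : ℝ) (ha : a ≠ 0) (hb : b ≠ 0) :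
    caustic a b p₁ p₂ v₁ v₂ =
      (b * v₁ ^ 2 + a * v₂ ^ 2 - (v₁ * p₂ - p₁ * v₂) ^ 2) / (a * b) := by
  unfold caustic
  field_simp

/-- The quadratic form `v ↦ Λ(p,v)` is positive definite exactly when `p` lies
strictly inside the ellipse of the confocal family with parameter `λ = 0`. -/
theorem caustic_posdef_iff_inside (a b : ℝ) (hb : 0 < b) (hba : b < a)
    (p₁ p₂ : ℝ) :
    (∀ v₁ v₂ : ℝ, (v₁, v₂) ≠ ((0 : ℝ), (0 : ℝ)) → caustic a b p₁ p₂ v₁ v₂ > 0) ↔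
      p₁ ^ 2 / a + p₂ ^ 2 / b < 1 := by
  have ha : 0 < a := lt_trans hb hba
  have hab : 0 < a * b := mul_pos ha hb
  constructor
  · intro h
    have h1 := h 1 0 (by simp)
    rw [caustic_eq a b p₁ p₂ 1 0 ha.ne' hb.ne'] at h1
    have hA : 0 < b - p₂ ^ 2 := by
      have := (div_pos_iff.mp h1).resolve_right (fun ⟨_, h⟩ => absurd hab (not_lt.mpr h.le))
      nlinarith [this.1]
    have h2 := h (-(p₁ * p₂)) (b - p₂ ^ 2) (by simp [hA.ne'])
    rw [caustic_eq _ _ _ _ _ _ ha.ne' hb.ne'] at h2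
    have h2' := (div_pos_iff.mp h2).resolve_right
      (fun ⟨_, h⟩ => absurd hab (not_lt.mpr h.le))
    have hdet : b * p₁ ^ 2 + a * p₂ ^ 2 < a * b := by nlinarith [h2'.1, hA]
    rw [div_add_div _ _ ha.ne' hb.ne', div_lt_one hab]
    linarith
  · intro hp v₁ v₂ hv
    have hdet : b * p₁ ^ 2 + a * p₂ ^ 2 < a * b := by
      rw [div_add_div _ _ ha.ne' hb.ne', div_lt_one hab] at hp
      linarith
    have hA : 0 < b - p₂ ^ 2 := by nlinarith [sq_nonneg p₁]
    rw [caustic_eq _ _ _ _ _ _ ha.ne' hb.ne']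
    apply div_pos _ hab
    rcases eq_or_ne v₂ 0 with rfl | hv2
    · have hv1 : v₁ ≠ 0 := by simpa using hv
      nlinarith [pow_pos (abs_pos.mpr hv1) 2, sq_abs v₁]
    · nlinarith [pow_pos (abs_pos.mpr hv2) 2, sq_abs v₂,
        sq_nonneg ((b - p₂ ^ 2) * v₁ + p₁ * p₂ * v₂)]
end

section
/- Let λ₀ < b, let p = (p₁,p₂) satisfy p₁²/(a−λ₀) + p₂²/(b−λ₀) ≤ 1 (p lies inside or on the confocal ellipse with parameter λ₀), and let v = (v₁,v₂) be a unit vector (v₁² + v₂² = 1). If λ := ab·Λ(p,v) satisfies λ < b, then λ ≥ λ₀. That is, for a billiard whose domain lies inside the ellipse with parameter λ₀, every elliptic caustic parameter is at least λ₀: the caustic ellipse lies inside the boundary ellipse. -/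
/-- For a billiard whose domain lies inside the ellipse with parameter `λ₀`,
every elliptic caustic parameter is at least `λ₀`: the caustic ellipse lies
inside the boundary ellipse. -/
theorem elliptic_caustic_inside_boundary (a b : ℝ) (hb : 0 < b) (hba : b < a)
    (lam₀ : ℝ) (hl₀ : lam₀ < b)
    (p₁ p₂ : ℝ) (hp : p₁ ^ 2 / (a - lam₀) + p₂ ^ 2 / (b - lam₀) ≤ 1)
    (v₁ v₂ : ℝ) (hv : v₁ ^ 2 + v₂ ^ 2 = 1)
    (hl : a * b * caustic a b p₁ p₂ v₁ v₂ < b) :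
    a * b * caustic a b p₁ p₂ v₁ v₂ ≥ lam₀ := by
  have ha : 0 < a := hb.trans hba
  have hA : 0 < a - lam₀ := by linarith
  have hB : 0 < b - lam₀ := by linarith
  have hp' : p₁ ^ 2 * (b - lam₀) + p₂ ^ 2 * (a - lam₀) ≤ (a - lam₀) * (b - lam₀) := by
    rw [div_add_div _ _ (ne_of_gt hA) (ne_of_gt hB), div_le_one (by positivity)] at hp
    nlinarith [hp]
  have hc : a * b * caustic a b p₁ p₂ v₁ v₂
      = b * v₁ ^ 2 + a * v₂ ^ 2 - (v₁ * p₂ - p₁ * v₂) ^ 2 := by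
    unfold caustic
    field_simp
  rw [hc]
  have key : 0 ≤ (a - lam₀) * (b - lam₀) *
      ((b - lam₀) * v₁ ^ 2 + (a - lam₀) * v₂ ^ 2 - (v₁ * p₂ - p₁ * v₂) ^ 2) := by
    nlinarith [sq_nonneg ((b - lam₀) * v₁ * p₁ + (a - lam₀) * v₂ * p₂),
      mul_nonneg (by positivity : (0:ℝ) ≤ (b - lam₀) * v₁ ^ 2 + (a - lam₀) * v₂ ^ 2)
        (sub_nonneg.2 hp')]
  have h3 : 0 ≤ (b - lam₀) * v₁ ^ 2 + (a - lam₀) * v₂ ^ 2 - (v₁ * p₂ - p₁ * v₂) ^ 2 :=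
    nonneg_of_mul_nonneg_left (by linarith [key, mul_comm ((a - lam₀) * (b - lam₀)) ((b - lam₀) * v₁ ^ 2 + (a - lam₀) * v₂ ^ 2 - (v₁ * p₂ - p₁ * v₂) ^ 2)] : (0:ℝ) ≤ ((b - lam₀) * v₁ ^ 2 + (a - lam₀) * v₂ ^ 2 - (v₁ * p₂ - p₁ * v₂) ^ 2) * ((a - lam₀) * (b - lam₀))) (mul_pos hA hB)
  nlinarith [h3, hv]
end
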